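/- Let Ω ⊂ ℝ^d be compact, x₀ ∈ Ω, p, q > 0; set s = p/d, α = s/(1+s), β = 1/(1+s). Let ρ : Ω → [0,∞) be integrable and let φ : Ω → (0,∞) be measurable with ∫_Ω φ dx < ∞, ∫_Ω ρ·φ^{−s} dx < ∞ and ∫_Ω |x−x₀|^q φ(x) dx < ∞. For small ε > 0 define μ_ε = ε^β·φ·(Lebesgue measure restricted to Ω) + (1 − ε^β∫_Ω φ dx)·δ_{x₀}, and define G_ε(μ) = ε^α ∫_Ω ρ(x)·u(x)^{−s} dx + ε^{−β} ∫_{Ω×Ω} |x−y|^q dμ(x) dμ(y), where u is the Radon–Nikodym derivative of μ with respect to Lebesgue measure. Then lim_{ε→0⁺} G_ε(μ_ε) = ∫_Ω [ ρ(x)·φ(x)^{−s} + 2·|x−x₀|^q·φ(x) ] dx. -/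

import Mathlib

open MeasureTheory Filter Topology
open scoped ENNReal

/-- limit of the rescaled functional `G_ε` along the recovery family
`μ_ε = ε^β·φ·(Leb⌊Ω) + (1 − ε^β∫_Ω φ)·δ_{x₀}`:
`G_ε(μ_ε) → ∫_Ω [ρ·φ^(−s) + 2·|x−x₀|^q·φ] dx` as `ε → 0⁺`, where
`G_ε(μ) = ε^α ∫_Ω ρ·u^(−s) dx + ε^(−β) ∫∫ |x−y|^q dμ dμ` and `u = dμ/dLeb`. -/
theorem G_eps_limit_on_recovery_family
    (d : ℕ) (hd : 0 < d)
    (Ω : Set (EuclideanSpace ℝ (Fin d))) (hΩ : IsCompact Ω)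
    (x₀ : EuclideanSpace ℝ (Fin d)) (hx₀ : x₀ ∈ Ω)
    (p q s α β : ℝ) (hp : 0 < p) (hq : 0 < q)
    (hs : s = p / d) (hα : α = s / (1 + s)) (hβ : β = 1 / (1 + s))
    (ρ : EuclideanSpace ℝ (Fin d) → ℝ) (hρ0 : ∀ x ∈ Ω, 0 ≤ ρ x)
    (hρint : IntegrableOn ρ Ω)
    (φ : EuclideanSpace ℝ (Fin d) → ℝ) (hφm : Measurable φ)
    (hφpos : ∀ x ∈ Ω, 0 < φ x)
    (hφint : IntegrableOn φ Ω)
    (hloc : IntegrableOn (fun x => ρ x * φ x ^ (-s)) Ω)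
    (hmom : IntegrableOn (fun x => dist x x₀ ^ q * φ x) Ω)
    (μ : ℝ → Measure (EuclideanSpace ℝ (Fin d)))
    (hμ : ∀ ε : ℝ, 0 < ε → ε ^ β * ∫ x in Ω, φ x ≤ 1 →
      μ ε = (volume.restrict Ω).withDensity (fun x => ENNReal.ofReal (ε ^ β * φ x))
        + (ENNReal.ofReal (1 - ε ^ β * ∫ x in Ω, φ x)) • Measure.dirac x₀)
    (G : ℝ → Measure (EuclideanSpace ℝ (Fin d)) → ℝ≥0∞)
    (hG : ∀ ε ν, G ε ν =
      ENNReal.ofReal (ε ^ α) *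
          (∫⁻ x in Ω, ENNReal.ofReal (ρ x) * (ν.rnDeriv volume x) ^ (-s))
        + ENNReal.ofReal (ε ^ (-β)) *
          ∫⁻ x, ∫⁻ y, ENNReal.ofReal (dist x y ^ q) ∂ν ∂ν) :
    Tendsto (fun ε => G ε (μ ε)) (𝓝[>] 0)
      (𝓝 (ENNReal.ofReal
        (∫ x in Ω, (ρ x * φ x ^ (-s) + 2 * dist x x₀ ^ q * φ x)))) := by
  classical
  have hd' : (0:ℝ) < d := by exact_mod_cast hd
  have hspos : 0 < s := hs ▸ div_pos hp hd'
  have h1s : (0:ℝ) < 1 + s := by linarith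
  have hαβs : α = β * s := by rw [hα, hβ]; field_simp
  have hβpos : 0 < β := hβ ▸ div_pos one_pos h1s
  have hΩm : MeasurableSet Ω := hΩ.isClosed.measurableSet
  haveI : Nonempty (Fin d) := Fin.pos_iff_nonempty.mp hd
  set F : ℝ := ∫ x in Ω, φ x with hF
  set R : ℝ := ∫ x in Ω, ρ x * φ x ^ (-s) with hR
  set B : ℝ := ∫ x in Ω, dist x x₀ ^ q * φ x with hB
  set k : EuclideanSpace ℝ (Fin d) → EuclideanSpace ℝ (Fin d) → ℝ≥0∞ :=
    fun x y => ENNReal.ofReal (dist x y ^ q) with hk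
  have hkm : Measurable (fun pr : EuclideanSpace ℝ (Fin d) × EuclideanSpace ℝ (Fin d) =>
      k pr.1 pr.2) :=
    ENNReal.measurable_ofReal.comp ((Real.continuous_rpow_const hq.le).measurable.comp
      (measurable_fst.dist measurable_snd))
  have hkx : ∀ x, Measurable (k x) :=
    fun x => ENNReal.measurable_ofReal.comp ((Real.continuous_rpow_const hq.le).measurable.comp
      (measurable_const.dist measurable_id))
  have hkx0 : Measurable (fun x => k x x₀) :=
    ENNReal.measurable_ofReal.comp ((Real.continuous_rpow_const hq.le).measurable.comp
      (measurable_id.dist measurable_const))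
  -- the double integral kernel constant
  set D₀ : ℝ≥0∞ := ∫⁻ x in Ω, ENNReal.ofReal (φ x) *
      ∫⁻ y in Ω, ENNReal.ofReal (φ y) * k x y with hD₀def
  have hφlt : ∫⁻ x in Ω, ENNReal.ofReal (φ x) < ⊤ := hφint.lintegral_lt_top
  have hkC : ∀ x ∈ Ω, ∀ y ∈ Ω, k x y ≤ ENNReal.ofReal (Metric.diam Ω ^ q) := by
    intro x hx y hy
    exact ENNReal.ofReal_le_ofReal
      (Real.rpow_le_rpow dist_nonneg (Metric.dist_le_diam_of_mem hΩ.isBounded hx hy) hq.le)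
  have hD₀ : D₀ ≠ ⊤ := by
    have hinner : ∀ x ∈ Ω, (∫⁻ y in Ω, ENNReal.ofReal (φ y) * k x y)
        ≤ (∫⁻ y in Ω, ENNReal.ofReal (φ y)) * ENNReal.ofReal (Metric.diam Ω ^ q) := by
      intro x hx
      rw [← lintegral_mul_const' _ _ ENNReal.ofReal_ne_top]
      refine setLIntegral_mono_ae (by fun_prop) ?_
      exact ae_of_all _ fun y hy => mul_le_mul_right (hkC x hx y hy) _
    have h1 : D₀ ≤ ∫⁻ x in Ω, ENNReal.ofReal (φ x) *
        ((∫⁻ y in Ω, ENNReal.ofReal (φ y)) * ENNReal.ofReal (Metric.diam Ω ^ q)) := by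
      refine setLIntegral_mono_ae (by fun_prop) ?_
      exact ae_of_all _ fun x hx => mul_le_mul_right (hinner x hx) _
    rw [lintegral_mul_const' _ _ (by finiteness)] at h1
    exact (h1.trans_lt (by exact ENNReal.mul_lt_top hφlt (by finiteness))).ne
  -- nonnegativity facts
  have hRnn : 0 ≤ R := setIntegral_nonneg hΩm fun x hx =>
    mul_nonneg (hρ0 x hx) (Real.rpow_nonneg (hφpos x hx).le _)
  have hBnn : 0 ≤ B := setIntegral_nonneg hΩm fun x hx =>
    mul_nonneg (Real.rpow_nonneg dist_nonneg _) (hφpos x hx).le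
  have hSR : ∫⁻ x in Ω, ENNReal.ofReal (ρ x * φ x ^ (-s)) = ENNReal.ofReal R := by
    refine (ofReal_integral_eq_lintegral_ofReal hloc ?_).symm
    refine (ae_restrict_iff' hΩm).2 (ae_of_all _ fun x hx =>
      mul_nonneg (hρ0 x hx) (Real.rpow_nonneg (hφpos x hx).le _))
  have hSB : ∫⁻ x in Ω, ENNReal.ofReal (dist x x₀ ^ q * φ x) = ENNReal.ofReal B := by
    refine (ofReal_integral_eq_lintegral_ofReal hmom ?_).symm
    refine (ae_restrict_iff' hΩm).2 (ae_of_all _ fun x hx =>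
      mul_nonneg (Real.rpow_nonneg dist_nonneg _) (hφpos x hx).le)
  -- key identity
  have key : ∀ ε : ℝ, 0 < ε → ε ^ β * F ≤ 1 →
      G ε (μ ε) = ENNReal.ofReal R + (ENNReal.ofReal (ε ^ β) * D₀ +
        ENNReal.ofReal (1 - ε ^ β * F) * (2 * ENNReal.ofReal B)) := by
    intro ε hε h1
    have hεβ : 0 < ε ^ β := Real.rpow_pos_of_pos hε β
    set g : EuclideanSpace ℝ (Fin d) → ℝ≥0∞ :=
      fun x => ENNReal.ofReal (ε ^ β * φ x) with hg
    have hgm : Measurable g := (measurable_const.mul hφm).ennreal_ofReal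
    set c : ℝ≥0∞ := ENNReal.ofReal (1 - ε ^ β * F) with hc
    have hc_ne : c ≠ ⊤ := ENNReal.ofReal_ne_top
    rw [hG, hμ ε hε h1]
    set ν₁ : Measure (EuclideanSpace ℝ (Fin d)) := (volume.restrict Ω).withDensity g with hν₁
    haveI : IsFiniteMeasure (c • Measure.dirac x₀) := by
      refine ⟨?_⟩
      rw [Measure.smul_apply, measure_univ, smul_eq_mul, mul_one]
      exact ENNReal.ofReal_lt_top
    have hsing : (c • Measure.dirac x₀) ⟂ₘ volume :=
      (mutuallySingular_dirac x₀ volume).smul c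
    haveI hfin1 : IsFiniteMeasure (volume.withDensity (Ω.indicator g)) := by
      refine isFiniteMeasure_withDensity ?_
      rw [lintegral_indicator hΩm]
      have hle : ∫⁻ x in Ω, g x ≤ ∫⁻ x in Ω, ENNReal.ofReal (ε ^ β) * ENNReal.ofReal (φ x) := by
        refine lintegral_mono fun x => ?_
        rw [← ENNReal.ofReal_mul hεβ.le]
      rw [lintegral_const_mul' _ _ ENNReal.ofReal_ne_top] at hle
      exact (hle.trans_lt (by finiteness)).ne
    have hrn : (ν₁ + c • Measure.dirac x₀).rnDeriv volume =ᵐ[volume] Ω.indicator g := by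
      have h1 : ν₁ = volume.withDensity (Ω.indicator g) := (withDensity_indicator hΩm g).symm
      rw [h1]
      exact (Measure.rnDeriv_add_of_mutuallySingular _ _ _ hsing).trans
        (Measure.rnDeriv_withDensity volume (hgm.indicator hΩm))
    -- first term
    have hT1 : ∫⁻ x in Ω, ENNReal.ofReal (ρ x) *
          ((ν₁ + c • Measure.dirac x₀).rnDeriv volume x) ^ (-s)
        = ENNReal.ofReal ((ε ^ β) ^ (-s)) * ENNReal.ofReal R := by
      rw [← hSR, ← lintegral_const_mul' _ _ ENNReal.ofReal_ne_top]
      refine lintegral_congr_ae ?_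
      filter_upwards [ae_restrict_of_ae hrn, ae_restrict_mem hΩm] with x hx hxΩ
      rw [hx, Set.indicator_of_mem hxΩ]
      have hφx := hφpos x hxΩ
      have hpos : 0 < ε ^ β * φ x := mul_pos hεβ hφx
      rw [hg]
      rw [ENNReal.ofReal_rpow_of_pos hpos, Real.mul_rpow hεβ.le hφx.le,
        ENNReal.ofReal_mul (Real.rpow_nonneg hεβ.le _),
        ENNReal.ofReal_mul (hρ0 x hxΩ)]
      ring
    have hcoef : ENNReal.ofReal (ε ^ α) * ENNReal.ofReal ((ε ^ β) ^ (-s)) = 1 := by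
      rw [← Real.rpow_mul hε.le, ← ENNReal.ofReal_mul (Real.rpow_nonneg hε.le _),
        ← Real.rpow_add hε]
      have : α + β * (-s) = 0 := by rw [hαβs]; ring
      rw [this, Real.rpow_zero, ENNReal.ofReal_one]
    -- second term
    set e : ℝ≥0∞ := ENNReal.ofReal (ε ^ β) with he
    have hgsplit : ∀ y, g y = e * ENNReal.ofReal (φ y) :=
      fun y => ENNReal.ofReal_mul hεβ.le
    have hinner : ∀ x, ∫⁻ y, k x y ∂(ν₁ + c • Measure.dirac x₀)
        = (∫⁻ y in Ω, g y * k x y) + c * k x x₀ := by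
      intro x
      rw [lintegral_add_measure, lintegral_smul_measure, lintegral_dirac, hν₁,
        lintegral_withDensity_eq_lintegral_mul _ hgm (hkx x)]
      rfl
    have hJm : Measurable fun x => ∫⁻ y in Ω, g y * k x y := by
      refine Measurable.lintegral_prod_right' (f := fun pr => g pr.2 * k pr.1 pr.2) ?_
      exact (hgm.comp measurable_snd).mul hkm
    have hbigm : Measurable fun x => (∫⁻ y in Ω, g y * k x y) + c * k x x₀ :=
      hJm.add (measurable_const.mul hkx0)
    have hkxx : k x₀ x₀ = 0 := by
      simp [hk, dist_self, Real.zero_rpow hq.ne']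
    have hT2 : ∫⁻ x, ∫⁻ y, k x y ∂(ν₁ + c • Measure.dirac x₀) ∂(ν₁ + c • Measure.dirac x₀)
        = (∫⁻ x in Ω, g x * ((∫⁻ y in Ω, g y * k x y) + c * k x x₀))
          + c * (∫⁻ y in Ω, g y * k x₀ y) := by
      rw [lintegral_congr hinner, lintegral_add_measure, lintegral_smul_measure,
        lintegral_dirac, hν₁, lintegral_withDensity_eq_lintegral_mul _ hgm hbigm, hkxx,
        mul_zero, add_zero]
      rfl
    -- identify the pieces
    have hE : ∫⁻ x in Ω, g x * k x x₀ = e * ENNReal.ofReal B := by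
      rw [← hSB, ← lintegral_const_mul' _ _ ENNReal.ofReal_ne_top]
      refine lintegral_congr fun x => ?_
      simp only [hk, hgsplit x]
      rw [mul_assoc, mul_comm (ENNReal.ofReal (φ x)) _,
        ← ENNReal.ofReal_mul (Real.rpow_nonneg dist_nonneg q)]
    have hE' : ∫⁻ y in Ω, g y * k x₀ y = e * ENNReal.ofReal B := by
      rw [← hE]
      refine lintegral_congr fun y => ?_
      simp only [hk]
      rw [dist_comm]
    have hA : ∫⁻ x in Ω, g x * ∫⁻ y in Ω, g y * k x y = e * e * D₀ := by
      have hpoint : ∀ x, g x * ∫⁻ y in Ω, g y * k x y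
          = (e * e) * (ENNReal.ofReal (φ x) * ∫⁻ y in Ω, ENNReal.ofReal (φ y) * k x y) := by
        intro x
        have : ∫⁻ y in Ω, g y * k x y = e * ∫⁻ y in Ω, ENNReal.ofReal (φ y) * k x y := by
          rw [← lintegral_const_mul' _ _ ENNReal.ofReal_ne_top]
          exact lintegral_congr fun y => by rw [hgsplit, mul_assoc]
        rw [this, hgsplit x]
        ring
      rw [lintegral_congr hpoint, lintegral_const_mul' _ _ (by finiteness), hD₀def]
    have hT2' : ∫⁻ x, ∫⁻ y, k x y ∂(ν₁ + c • Measure.dirac x₀) ∂(ν₁ + c • Measure.dirac x₀)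
        = e * e * D₀ + c * (e * ENNReal.ofReal B) + c * (e * ENNReal.ofReal B) := by
      rw [hT2, hE']
      have : ∫⁻ x in Ω, g x * ((∫⁻ y in Ω, g y * k x y) + c * k x x₀)
          = (∫⁻ x in Ω, g x * ∫⁻ y in Ω, g y * k x y) + c * ∫⁻ x in Ω, g x * k x x₀ := by
        rw [← lintegral_const_mul' _ _ hc_ne, ← lintegral_add_left (f := fun x => g x * ∫⁻ y in Ω, g y * k x y) (hgm.mul hJm)]
        exact lintegral_congr fun x => by ring
      rw [this, hA, hE]
    have hee : ENNReal.ofReal (ε ^ (-β)) * e = 1 := by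
      rw [he, ← ENNReal.ofReal_mul (Real.rpow_nonneg hε.le _), ← Real.rpow_add hε,
        neg_add_cancel, Real.rpow_zero, ENNReal.ofReal_one]
    rw [hT1, hT2', ← mul_assoc, hcoef, one_mul]
    congr 1
    calc ENNReal.ofReal (ε ^ (-β)) *
          (e * e * D₀ + c * (e * ENNReal.ofReal B) + c * (e * ENNReal.ofReal B))
        = (ENNReal.ofReal (ε ^ (-β)) * e) * (e * D₀)
          + (ENNReal.ofReal (ε ^ (-β)) * e) * (c * (2 * ENNReal.ofReal B)) := by ring
      _ = e * D₀ + c * (2 * ENNReal.ofReal B) := by rw [hee, one_mul, one_mul]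
  -- limit
  have hβt : Tendsto (fun ε : ℝ => ε ^ β) (𝓝[>] (0:ℝ)) (𝓝 0) := by
    have h := (Real.continuousAt_rpow_const 0 β (Or.inr hβpos.le)).tendsto
    rw [Real.zero_rpow hβpos.ne'] at h
    exact h.mono_left nhdsWithin_le_nhds
  have hFt : Tendsto (fun ε : ℝ => ε ^ β * F) (𝓝[>] (0:ℝ)) (𝓝 0) := by
    simpa using hβt.mul_const F
  have hev : ∀ᶠ ε in 𝓝[>] (0:ℝ), 0 < ε ∧ ε ^ β * F ≤ 1 := by
    have h3 : ∀ᶠ ε in 𝓝[>] (0:ℝ), ε ^ β * F < 1 :=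
      hFt.eventually_lt_const one_pos
    filter_upwards [self_mem_nhdsWithin, h3] with ε h h3
    exact ⟨h, h3.le⟩
  have hfun : (fun ε => ENNReal.ofReal R + (ENNReal.ofReal (ε ^ β) * D₀ +
        ENNReal.ofReal (1 - ε ^ β * F) * (2 * ENNReal.ofReal B)))
      =ᶠ[𝓝[>] (0:ℝ)] fun ε => G ε (μ ε) := by
    filter_upwards [hev] with ε hε
    exact (key ε hε.1 hε.2).symm
  have hval : ENNReal.ofReal (∫ x in Ω, (ρ x * φ x ^ (-s) + 2 * dist x x₀ ^ q * φ x))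
      = ENNReal.ofReal R + (0 * D₀ + ENNReal.ofReal 1 * (2 * ENNReal.ofReal B)) := by
    have hint2 : IntegrableOn (fun x => 2 * dist x x₀ ^ q * φ x) Ω := by
      exact (by simpa [mul_assoc] using hmom.const_mul 2 :
        Integrable (fun x => 2 * dist x x₀ ^ q * φ x) (volume.restrict Ω))
    have h2B : ∫ x in Ω, 2 * dist x x₀ ^ q * φ x = 2 * B := by
      rw [hB, ← integral_const_mul]
      exact integral_congr_ae (ae_of_all _ fun x => by ring)
    rw [integral_add hloc hint2, ← hR, h2B,
      ENNReal.ofReal_add hRnn (by positivity),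
      ENNReal.ofReal_mul (by norm_num : (0:ℝ) ≤ 2)]
    simp
  rw [hval]
  refine Tendsto.congr' hfun ?_
  refine Tendsto.add tendsto_const_nhds (Tendsto.add ?_ ?_)
  · refine ENNReal.Tendsto.mul_const ?_ (Or.inr hD₀)
    have := (ENNReal.continuous_ofReal.tendsto 0).comp hβt
    simpa [Function.comp_def] using this
  · refine ENNReal.Tendsto.mul_const ?_ (Or.inl (by simp))
    have h1 : Tendsto (fun ε : ℝ => 1 - ε ^ β * F) (𝓝[>] (0:ℝ)) (𝓝 1) := by
      have := (tendsto_const_nhds (x := (1:ℝ)) (f := 𝓝[>] (0:ℝ))).sub hFt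
      simpa using this
    exact (ENNReal.continuous_ofReal.tendsto 1).comp h1
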